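/- Let X_1,…,X_n and Y_1,…,Y_n be independent i.i.d. sequences over a finite alphabet with the same distribution. Let v be an alignment of length k with aligned index pairs (i_1,j_1),…,(i_k,j_k), and let B(v) be the event that v is the highest optimal alignment of X and Y. Then P(B(v)) ≤ p_o^k · q^{2(n−k)−(j_1−1)−(n−i_k)}. -/

import Mathlib

open MeasureTheory ProbabilityTheory Filter Set
open scoped ENNReal NNReal Topology

noncomputable section

namespace PaperLCS

/-- The binary entropy function `h(x) = -x log₂ x - (1-x) log₂ (1-x)`. -/
def binEnt (x : ℝ) : ℝ := -x * Real.logb 2 x - (1 - x) * Real.logb 2 (1 - x)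

variable {A : Type*}

/-- `(i, j)` is an alignment of the sequences `X₁ … X_{nx}` and `Y₁ … Y_{ny}`
(1-based indexing) of length `k`. -/
def IsAlignment (X Y : ℕ → A) (nx ny k : ℕ) (i j : Fin k → ℕ) : Prop :=
  StrictMono i ∧ StrictMono j ∧
    (∀ t, 1 ≤ i t ∧ i t ≤ nx) ∧ (∀ t, 1 ≤ j t ∧ j t ≤ ny) ∧
    ∀ t, X (i t) = Y (j t)

/-- `L(X₁…X_{nx}; Y₁…Y_{ny})`, the length of the longest common subsequence. -/
def lcsLen (X Y : ℕ → A) (nx ny : ℕ) : ℕ :=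
  sSup {k | ∃ i j : Fin k → ℕ, IsAlignment X Y nx ny k i j}

/-- An optimal alignment: an alignment of maximal length. -/
def IsOptimal (X Y : ℕ → A) (nx ny k : ℕ) (i j : Fin k → ℕ) : Prop :=
  IsAlignment X Y nx ny k i j ∧ k = lcsLen X Y nx ny

/-- The highest alignment: the optimal alignment such that for every `t`,
`j t` is maximal among all optimal alignments, and `i t` is minimal among the optimal
alignments attaining this maximal `j t`. -/
def IsHighest (X Y : ℕ → A) (nx ny k : ℕ) (i j : Fin k → ℕ) : Prop :=
  IsOptimal X Y nx ny k i j ∧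
    ∀ i' j' : Fin k → ℕ, IsOptimal X Y nx ny k i' j' →
      ∀ t, j' t ≤ j t ∧ (j' t = j t → i t ≤ i' t)

/-- The lowest alignment. -/
def IsLowest (X Y : ℕ → A) (nx ny k : ℕ) (i j : Fin k → ℕ) : Prop :=
  IsOptimal X Y nx ny k i j ∧
    ∀ i' j' : Fin k → ℕ, IsOptimal X Y nx ny k i' j' →
      ∀ t, j t ≤ j' t ∧ (j' t = j t → i' t ≤ i t)

/-- The left-most (nord-west) alignment. -/
def IsLeftmost (X Y : ℕ → A) (nx ny k : ℕ) (i j : Fin k → ℕ) : Prop :=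
  IsOptimal X Y nx ny k i j ∧
    ∀ i' j' : Fin k → ℕ, IsOptimal X Y nx ny k i' j' →
      ∀ t, i t ≤ i' t ∧ (i' t = i t → j' t ≤ j t)


variable {Ω : Type*} [MeasurableSpace Ω] {μ : MeasureTheory.Measure Ω}
variable {A : Type*} [Fintype A] [Nonempty A] [MeasurableSpace A] [MeasurableSingletonClass A]

/-- `p_a := P(X₁ = a)` expressed via the common one-letter distribution `ν`. -/
def pLetter (ν : MeasureTheory.Measure A) (a : A) : ℝ := (ν {a}).toReal

/-- `p_o := Σ_a p_a²`. -/
def pMatch (ν : MeasureTheory.Measure A) : ℝ := ∑ a : A, (pLetter ν a) ^ 2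

/-- `q := 1 - min_a p_a`. -/
def qConst (ν : MeasureTheory.Measure A) : ℝ :=
  1 - Finset.univ.inf' Finset.univ_nonempty (pLetter ν)

/-- For two independent i.i.d. sequences with common one-letter
distribution `ν`, and a fixed alignment pattern `v` of length `k` with pairs
`(i₁,j₁),…,(i_k,j_k)`, the probability of the event `B(v)` that `v` is the highest
optimal alignment of `X` and `Y` satisfies
`P(B(v)) ≤ p_o^k · q^{2(n-k)-(j₁-1)-(n-i_k)}`. -/
lemma highY_ne {X Y : ℕ → A} {n k : ℕ} {i j : Fin k → ℕ}
    (hH : IsHighest X Y n n k i j) (t : Fin k) (p : ℕ)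
    (h1 : j t < p) (h2 : ∀ s, t < s → p < j s) (h3 : p ≤ n) :
    Y p ≠ X (i t) := by
  intro heq
  obtain ⟨⟨⟨hi, hj, hib, hjb, hmatch⟩, hopt⟩, hmax⟩ := hH
  classical
  set j' := Function.update j t p with hj'
  have hmono : StrictMono j' := by
    intro a b hab
    rcases eq_or_ne a t with rfl | ha
    · have hb : b ≠ a := hab.ne'
      simp only [hj', Function.update_self, Function.update_of_ne hb]
      exact h2 b hab
    · rcases eq_or_ne b t with rfl | hb
      · simp only [hj', Function.update_self, Function.update_of_ne ha]
        exact (hj hab).trans h1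
      · simp only [hj', Function.update_of_ne ha, Function.update_of_ne hb]
        exact hj hab
  have halign : IsAlignment X Y n n k i j' := by
    refine ⟨hi, hmono, hib, ?_, ?_⟩
    · intro s
      rcases eq_or_ne s t with rfl | hs
      · simp only [hj', Function.update_self]
        exact ⟨le_trans (hjb s).1 (le_of_lt h1), h3⟩
      · simp only [hj', Function.update_of_ne hs]; exact hjb s
    · intro s
      rcases eq_or_ne s t with rfl | hs
      · simp only [hj', Function.update_self]; exact heq.symm ▸ rfl
      · simp only [hj', Function.update_of_ne hs]; exact hmatch s
  have := (hmax i j' ⟨halign, hopt⟩ t).1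
  simp only [hj', Function.update_self] at this
  omega

lemma lowX_ne {X Y : ℕ → A} {n k : ℕ} {i j : Fin k → ℕ}
    (hH : IsHighest X Y n n k i j) (t : Fin k) (p : ℕ)
    (h1 : p < i t) (h2 : 1 ≤ p) (h3 : ∀ s, s < t → i s < p) :
    X p ≠ Y (j t) := by
  intro heq
  obtain ⟨⟨⟨hi, hj, hib, hjb, hmatch⟩, hopt⟩, hmax⟩ := hH
  classical
  set i' := Function.update i t p with hi'
  have hmono : StrictMono i' := by
    intro a b hab
    rcases eq_or_ne a t with rfl | ha
    · have hb : b ≠ a := hab.ne'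
      simp only [hi', Function.update_self, Function.update_of_ne hb]
      exact h1.trans (hi hab)
    · rcases eq_or_ne b t with rfl | hb
      · simp only [hi', Function.update_self, Function.update_of_ne ha]
        exact h3 a hab
      · simp only [hi', Function.update_of_ne ha, Function.update_of_ne hb]
        exact hi hab
  have halign : IsAlignment X Y n n k i' j := by
    refine ⟨hmono, hj, ?_, hjb, ?_⟩
    · intro s
      rcases eq_or_ne s t with rfl | hs
      · simp only [hi', Function.update_self]
        exact ⟨h2, le_trans (le_of_lt h1) (hib s).2⟩
      · simp only [hi', Function.update_of_ne hs]; exact hib s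
    · intro s
      rcases eq_or_ne s t with rfl | hs
      · simp only [hi', Function.update_self]; exact heq
      · simp only [hi', Function.update_of_ne hs]; exact hmatch s
  have := (hmax i' j ⟨halign, hopt⟩ t).2 rfl
  simp only [hi', Function.update_self] at this
  omega

omit [Fintype A] [Nonempty A] [MeasurableSingletonClass A] in
lemma meas_biInter_preimage
    (X Y : ℕ → Ω → A) (ν : MeasureTheory.Measure A)
    (hmX : ∀ i, Measurable (X i)) (hmY : ∀ i, Measurable (Y i))
    (hindep : iIndepFun
      (Sum.elim X Y) μ)
    (hdX : ∀ i, μ.map (X i) = ν) (hdY : ∀ i, μ.map (Y i) = ν)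
    (S : Finset (ℕ ⊕ ℕ)) (T : ℕ ⊕ ℕ → Set A) (hT : ∀ c, MeasurableSet (T c)) :
    μ (⋂ c ∈ S, Sum.elim X Y c ⁻¹' T c) = ∏ c ∈ S, ν (T c) := by
  rw [hindep.meas_biInter (fun c _ => ⟨T c, hT c, rfl⟩)]
  refine Finset.prod_congr rfl fun c _ => ?_
  cases c with
  | inl a =>
    show μ (X a ⁻¹' T (Sum.inl a)) = ν (T (Sum.inl a))
    rw [← hdX a, Measure.map_apply (hmX a) (hT _)]
  | inr a =>
    show μ (Y a ⁻¹' T (Sum.inr a)) = ν (T (Sum.inr a))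
    rw [← hdY a, Measure.map_apply (hmY a) (hT _)]

omit [MeasurableSingletonClass A] in
lemma pMatch_nonneg (ν : MeasureTheory.Measure A) : 0 ≤ pMatch ν :=
  Finset.sum_nonneg fun _ _ => sq_nonneg _

omit [MeasurableSingletonClass A] in
lemma qConst_nonneg (ν : MeasureTheory.Measure A) [MeasureTheory.IsProbabilityMeasure ν] :
    0 ≤ qConst ν := by
  obtain ⟨a⟩ := (inferInstance : Nonempty A)
  have h1 : Finset.univ.inf' Finset.univ_nonempty (pLetter ν) ≤ pLetter ν a :=
    Finset.inf'_le _ (Finset.mem_univ a)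
  have h2 : pLetter ν a ≤ 1 := by
    have := prob_le_one (μ := ν) (s := {a})
    simpa [pLetter] using ENNReal.toReal_mono ENNReal.one_ne_top this
  simp only [qConst]; linarith

lemma compl_singleton_le (ν : MeasureTheory.Measure A) [MeasureTheory.IsProbabilityMeasure ν]
    (a : A) : ν ({a}ᶜ) ≤ ENNReal.ofReal (qConst ν) := by
  rw [prob_compl_eq_one_sub (measurableSet_singleton a)]
  have h1 : Finset.univ.inf' Finset.univ_nonempty (pLetter ν) ≤ pLetter ν a :=
    Finset.inf'_le _ (Finset.mem_univ a)
  have hne : ν {a} ≠ ⊤ := measure_ne_top ν _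
  have : (1 : ℝ≥0∞) - ν {a} = ENNReal.ofReal (1 - pLetter ν a) := by
    simp only [pLetter]
    rw [ENNReal.ofReal_sub _ ENNReal.toReal_nonneg, ENNReal.ofReal_one,
      ENNReal.ofReal_toReal hne]
  rw [this]
  exact ENNReal.ofReal_le_ofReal (by simp only [qConst]; linarith)

omit [Nonempty A] in
lemma pMatch_eq (ν : MeasureTheory.Measure A) [MeasureTheory.IsProbabilityMeasure ν] :
    ENNReal.ofReal (pMatch ν) = ∑ a : A, ν {a} ^ 2 := by
  rw [pMatch, ENNReal.ofReal_sum_of_nonneg (fun a _ => sq_nonneg _)]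
  refine Finset.sum_congr rfl fun a _ => ?_
  rw [pLetter, ← ENNReal.toReal_pow, ENNReal.ofReal_toReal]
  exact ENNReal.pow_ne_top (measure_ne_top ν _)

theorem highest_alignment_prob_bound [MeasureTheory.IsProbabilityMeasure μ]
    (X Y : ℕ → Ω → A) (ν : MeasureTheory.Measure A) [MeasureTheory.IsProbabilityMeasure ν]
    (hmX : ∀ i, Measurable (X i)) (hmY : ∀ i, Measurable (Y i))
    (hindep : iIndepFun
      (Sum.elim X Y) μ)
    (hdX : ∀ i, μ.map (X i) = ν) (hdY : ∀ i, μ.map (Y i) = ν)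
    (n k : ℕ) (hk : 0 < k) (i j : Fin k → ℕ)
    (hi : StrictMono i) (hj : StrictMono j)
    (hib : ∀ t, 1 ≤ i t ∧ i t ≤ n) (hjb : ∀ t, 1 ≤ j t ∧ j t ≤ n) :
    μ {ω | IsHighest (fun t => X t ω) (fun t => Y t ω) n n k i j} ≤
      ENNReal.ofReal ((pMatch ν) ^ k *
        (qConst ν) ^ (2 * ((n : ℝ) - k) - ((j ⟨0, hk⟩ : ℝ) - 1)
          - ((n : ℝ) - (i ⟨k - 1, Nat.sub_lt hk Nat.one_pos⟩ : ℝ)))) := by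
  classical
  set t0 : Fin k := ⟨0, hk⟩ with ht0
  set tl : Fin k := ⟨k - 1, Nat.sub_lt hk Nat.one_pos⟩ with htl
  -- basic index bounds
  have hle_last : ∀ t : Fin k, t ≤ tl := fun t => by
    rw [Fin.le_def]; simp only [htl]; have := t.isLt; omega
  have h_i_le : ∀ t, i t ≤ i tl := fun t => hi.monotone (hle_last t)
  have h_j_ge : ∀ t, j t0 ≤ j t := fun t =>
    hj.monotone (by rw [Fin.le_def]; simp [ht0])
  have hstep_i : ∀ m (h : m < k), m + 1 ≤ i ⟨m, h⟩ := by
    intro m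
    induction m with
    | zero => intro h; exact (hib _).1
    | succ m ih =>
      intro h
      have h' : m < k := by omega
      have h2 := hi (show (⟨m, h'⟩ : Fin k) < ⟨m + 1, h⟩ by
        rw [Fin.lt_def]; simp)
      have := ih h'; omega
  have hstep_j : ∀ m (h : m < k), j t0 + m ≤ j ⟨m, h⟩ := by
    intro m
    induction m with
    | zero => intro h; simp [ht0]
    | succ m ih =>
      intro h
      have h' : m < k := by omega
      have h2 := hj (show (⟨m, h'⟩ : Fin k) < ⟨m + 1, h⟩ by
        rw [Fin.lt_def]; simp)
      have := ih h'; omega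
  have hik : k ≤ i tl := by
    have := hstep_i (k - 1) (Nat.sub_lt hk Nat.one_pos)
    simp only [← htl] at this
    omega
  have hj1 : j t0 + k ≤ n + 1 := by
    have h1 := hstep_j (k - 1) (Nat.sub_lt hk Nat.one_pos)
    have h2 := (hjb tl).2
    simp only [← htl] at h1
    omega
  -- tag functions
  set tX : ℕ → Fin k := fun p =>
    if h : (Finset.univ.filter fun t => p ≤ i t).Nonempty then
      (Finset.univ.filter fun t => p ≤ i t).min' h else t0 with htXdef
  set tY : ℕ → Fin k := fun p =>
    if h : (Finset.univ.filter fun t => j t ≤ p).Nonempty then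
      (Finset.univ.filter fun t => j t ≤ p).max' h else t0 with htYdef
  have htX1 : ∀ p, p ≤ i tl → p ≤ i (tX p) := by
    intro p hp
    have hne' : (Finset.univ.filter fun t => p ≤ i t).Nonempty :=
      ⟨tl, Finset.mem_filter.mpr ⟨Finset.mem_univ _, hp⟩⟩
    simp only [htXdef, dif_pos hne']
    exact (Finset.mem_filter.mp (Finset.min'_mem _ hne')).2
  have htX2 : ∀ p s, p ≤ i tl → s < tX p → i s < p := by
    intro p s hp hs
    by_contra hcon
    push_neg at hcon
    have hne' : (Finset.univ.filter fun t => p ≤ i t).Nonempty :=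
      ⟨tl, Finset.mem_filter.mpr ⟨Finset.mem_univ _, hp⟩⟩
    have hmem : s ∈ Finset.univ.filter fun t => p ≤ i t :=
      Finset.mem_filter.mpr ⟨Finset.mem_univ _, hcon⟩
    have : tX p ≤ s := by
      simp only [htXdef, dif_pos hne']
      exact Finset.min'_le _ _ hmem
    exact absurd hs (not_lt.mpr this)
  have htX3 : ∀ t, tX (i t) = t := by
    intro t
    have hmem : t ∈ Finset.univ.filter fun s => i t ≤ i s :=
      Finset.mem_filter.mpr ⟨Finset.mem_univ _, le_refl _⟩
    have hne' : (Finset.univ.filter fun s => i t ≤ i s).Nonempty := ⟨t, hmem⟩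
    simp only [htXdef, dif_pos hne']
    refine le_antisymm (Finset.min'_le _ _ hmem) ?_
    have := (Finset.mem_filter.mp (Finset.min'_mem _ hne')).2
    exact hi.le_iff_le.mp this
  have htY1 : ∀ p, j t0 ≤ p → j (tY p) ≤ p := by
    intro p hp
    have hne' : (Finset.univ.filter fun t => j t ≤ p).Nonempty :=
      ⟨t0, Finset.mem_filter.mpr ⟨Finset.mem_univ _, hp⟩⟩
    simp only [htYdef, dif_pos hne']
    exact (Finset.mem_filter.mp (Finset.max'_mem _ hne')).2
  have htY2 : ∀ p s, j t0 ≤ p → tY p < s → p < j s := by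
    intro p s hp hs
    by_contra hcon
    push_neg at hcon
    have hne' : (Finset.univ.filter fun t => j t ≤ p).Nonempty :=
      ⟨t0, Finset.mem_filter.mpr ⟨Finset.mem_univ _, hp⟩⟩
    have hmem : s ∈ Finset.univ.filter fun t => j t ≤ p :=
      Finset.mem_filter.mpr ⟨Finset.mem_univ _, hcon⟩
    have : s ≤ tY p := by
      simp only [htYdef, dif_pos hne']
      exact Finset.le_max' _ _ hmem
    exact absurd hs (not_lt.mpr this)
  have htY3 : ∀ t, tY (j t) = t := by
    intro t
    have hmem : t ∈ Finset.univ.filter fun s => j s ≤ j t :=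
      Finset.mem_filter.mpr ⟨Finset.mem_univ _, le_refl _⟩
    have hne' : (Finset.univ.filter fun s => j s ≤ j t).Nonempty := ⟨t, hmem⟩
    simp only [htYdef, dif_pos hne']
    refine le_antisymm ?_ (Finset.le_max' _ _ hmem)
    have := (Finset.mem_filter.mp (Finset.max'_mem _ hne')).2
    exact hj.le_iff_le.mp this
  -- the constraining events
  set qq : ℝ≥0∞ := ENNReal.ofReal (qConst ν) with hqq
  set SX : Finset ℕ := Finset.Icc 1 (i tl) with hSX
  set SY : Finset ℕ := Finset.Icc (j t0) n with hSY
  set T : (Fin k → A) → ℕ ⊕ ℕ → Set A := fun x c =>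
    Sum.elim (fun p => if p = i (tX p) then {x (tX p)} else ({x (tX p)}ᶜ : Set A))
      (fun p => if p = j (tY p) then {x (tY p)} else ({x (tY p)}ᶜ : Set A)) c with hTdef
  have hTmeas : ∀ x c, MeasurableSet (T x c) := by
    intro x c
    cases c <;> simp only [hTdef, Sum.elim_inl, Sum.elim_inr] <;> split_ifs <;>
      first
        | exact measurableSet_singleton _
        | exact (measurableSet_singleton _).compl
  -- inclusion into union of product events
  have hsub : {ω | IsHighest (fun t => X t ω) (fun t => Y t ω) n n k i j} ⊆
      ⋃ x ∈ (Finset.univ : Finset (Fin k → A)),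
        ⋂ c ∈ SX.disjSum SY, Sum.elim X Y c ⁻¹' T x c := by
    intro ω hω
    simp only [Set.mem_setOf_eq] at hω
    have hmatch : ∀ t, X (i t) ω = Y (j t) ω := fun t => hω.1.1.2.2.2.2 t
    refine Set.mem_biUnion (Finset.mem_univ fun t => X (i t) ω) ?_
    simp only [Set.mem_iInter]
    intro c hc
    match c with
    | Sum.inl p =>
      have hp := Finset.mem_Icc.mp (Finset.inl_mem_disjSum.mp hc)
      show X p ω ∈ T (fun t => X (i t) ω) (Sum.inl p)
      simp only [hTdef, Sum.elim_inl]
      by_cases hcase : p = i (tX p)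
      · rw [if_pos hcase]
        exact Set.mem_singleton_iff.mpr (by rw [← hcase])
      · rw [if_neg hcase]
        have h1 : p < i (tX p) := lt_of_le_of_ne (htX1 p hp.2) hcase
        have hne2 := lowX_ne hω (tX p) p h1 hp.1 (fun s hs => htX2 p s hp.2 hs)
        intro hEq
        rw [Set.mem_singleton_iff] at hEq
        exact hne2 (hEq.trans (hmatch (tX p)))
    | Sum.inr p =>
      have hp := Finset.mem_Icc.mp (Finset.inr_mem_disjSum.mp hc)
      show Y p ω ∈ T (fun t => X (i t) ω) (Sum.inr p)
      simp only [hTdef, Sum.elim_inr]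
      by_cases hcase : p = j (tY p)
      · rw [if_pos hcase]
        refine Set.mem_singleton_iff.mpr ?_
        conv_lhs => rw [hcase]
        exact (hmatch (tY p)).symm
      · rw [if_neg hcase]
        have h1 : j (tY p) < p := lt_of_le_of_ne (htY1 p hp.1) (Ne.symm hcase)
        have hne2 := highY_ne hω (tY p) p h1 (fun s hs => htY2 p s hp.1 hs) hp.2
        intro hEq
        rw [Set.mem_singleton_iff] at hEq
        exact hne2 hEq
  -- the per-x product bound
  have hxbound : ∀ x : Fin k → A,
      ∏ c ∈ SX.disjSum SY, ν (T x c) ≤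
        (∏ t, ν {x t} ^ 2) * qq ^ ((i tl - k) + (n + 1 - j t0 - k)) := by
    intro x
    rw [Finset.prod_disjSum]
    have himI : Finset.univ.image i ⊆ SX := by
      intro p hp
      obtain ⟨t, _, rfl⟩ := Finset.mem_image.mp hp
      exact Finset.mem_Icc.mpr ⟨(hib t).1, h_i_le t⟩
    have himJ : Finset.univ.image j ⊆ SY := by
      intro p hp
      obtain ⟨t, _, rfl⟩ := Finset.mem_image.mp hp
      exact Finset.mem_Icc.mpr ⟨h_j_ge t, (hjb t).2⟩
    have hXprod : ∏ p ∈ SX, ν (T x (Sum.inl p)) ≤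
        (∏ t, ν {x t}) * qq ^ (i tl - k) := by
      rw [← Finset.prod_sdiff himI]
      have e1 : ∏ p ∈ Finset.univ.image i, ν (T x (Sum.inl p)) = ∏ t, ν {x t} := by
        rw [Finset.prod_image (fun a _ b _ h => hi.injective h)]
        refine Finset.prod_congr rfl fun t _ => ?_
        simp only [hTdef, Sum.elim_inl, htX3 t, eq_self_iff_true, if_true]
      have e2 : ∏ p ∈ SX \ Finset.univ.image i, ν (T x (Sum.inl p)) ≤ qq ^ (i tl - k) := by
        have hcard : (SX \ Finset.univ.image i).card = i tl - k := by
          rw [Finset.card_sdiff_of_subset himI, Finset.card_image_of_injective _ hi.injective,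
            Finset.card_univ, Fintype.card_fin, hSX, Nat.card_Icc]
          omega
        calc ∏ p ∈ SX \ Finset.univ.image i, ν (T x (Sum.inl p))
            ≤ ∏ _p ∈ SX \ Finset.univ.image i, qq := by
              refine Finset.prod_le_prod' fun p hp => ?_
              have hnot := (Finset.mem_sdiff.mp hp).2
              have hne2 : p ≠ i (tX p) := fun h =>
                hnot (Finset.mem_image.mpr ⟨tX p, Finset.mem_univ _, h.symm⟩)
              simp only [hTdef, Sum.elim_inl, if_neg hne2]
              exact compl_singleton_le ν _
          _ = qq ^ (i tl - k) := by rw [Finset.prod_const, hcard]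
      calc (∏ p ∈ SX \ Finset.univ.image i, ν (T x (Sum.inl p))) *
            ∏ p ∈ Finset.univ.image i, ν (T x (Sum.inl p))
          ≤ qq ^ (i tl - k) * ∏ t, ν {x t} := mul_le_mul' e2 (le_of_eq e1)
        _ = (∏ t, ν {x t}) * qq ^ (i tl - k) := mul_comm _ _
    have hYprod : ∏ p ∈ SY, ν (T x (Sum.inr p)) ≤
        (∏ t, ν {x t}) * qq ^ (n + 1 - j t0 - k) := by
      rw [← Finset.prod_sdiff himJ]
      have e1 : ∏ p ∈ Finset.univ.image j, ν (T x (Sum.inr p)) = ∏ t, ν {x t} := by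
        rw [Finset.prod_image (fun a _ b _ h => hj.injective h)]
        refine Finset.prod_congr rfl fun t _ => ?_
        simp only [hTdef, Sum.elim_inr, htY3 t, eq_self_iff_true, if_true]
      have e2 : ∏ p ∈ SY \ Finset.univ.image j, ν (T x (Sum.inr p)) ≤
          qq ^ (n + 1 - j t0 - k) := by
        have hcard : (SY \ Finset.univ.image j).card = n + 1 - j t0 - k := by
          rw [Finset.card_sdiff_of_subset himJ, Finset.card_image_of_injective _ hj.injective,
            Finset.card_univ, Fintype.card_fin, hSY, Nat.card_Icc]
        calc ∏ p ∈ SY \ Finset.univ.image j, ν (T x (Sum.inr p))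
            ≤ ∏ _p ∈ SY \ Finset.univ.image j, qq := by
              refine Finset.prod_le_prod' fun p hp => ?_
              have hnot := (Finset.mem_sdiff.mp hp).2
              have hne2 : p ≠ j (tY p) := fun h =>
                hnot (Finset.mem_image.mpr ⟨tY p, Finset.mem_univ _, h.symm⟩)
              simp only [hTdef, Sum.elim_inr, if_neg hne2]
              exact compl_singleton_le ν _
          _ = qq ^ (n + 1 - j t0 - k) := by rw [Finset.prod_const, hcard]
      calc (∏ p ∈ SY \ Finset.univ.image j, ν (T x (Sum.inr p))) *
            ∏ p ∈ Finset.univ.image j, ν (T x (Sum.inr p))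
          ≤ qq ^ (n + 1 - j t0 - k) * ∏ t, ν {x t} := mul_le_mul' e2 (le_of_eq e1)
        _ = (∏ t, ν {x t}) * qq ^ (n + 1 - j t0 - k) := mul_comm _ _
    calc (∏ p ∈ SX, ν (T x (Sum.inl p))) * ∏ p ∈ SY, ν (T x (Sum.inr p))
        ≤ ((∏ t, ν {x t}) * qq ^ (i tl - k)) *
            ((∏ t, ν {x t}) * qq ^ (n + 1 - j t0 - k)) := mul_le_mul' hXprod hYprod
      _ = (∏ t, ν {x t} ^ 2) * qq ^ ((i tl - k) + (n + 1 - j t0 - k)) := by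
          rw [Finset.prod_pow, pow_add]; ring
  -- put it together
  have hmain : μ {ω | IsHighest (fun t => X t ω) (fun t => Y t ω) n n k i j} ≤
      (∑ a : A, ν {a} ^ 2) ^ k * qq ^ ((i tl - k) + (n + 1 - j t0 - k)) := by
    calc μ {ω | IsHighest (fun t => X t ω) (fun t => Y t ω) n n k i j}
        ≤ μ (⋃ x ∈ (Finset.univ : Finset (Fin k → A)),
            ⋂ c ∈ SX.disjSum SY, Sum.elim X Y c ⁻¹' T x c) := measure_mono hsub
      _ ≤ ∑ x ∈ (Finset.univ : Finset (Fin k → A)),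
            μ (⋂ c ∈ SX.disjSum SY, Sum.elim X Y c ⁻¹' T x c) :=
          measure_biUnion_finset_le _ _
      _ = ∑ x : Fin k → A, ∏ c ∈ SX.disjSum SY, ν (T x c) := by
          refine Finset.sum_congr rfl fun x _ => ?_
          exact meas_biInter_preimage X Y ν hmX hmY hindep hdX hdY _ _ (hTmeas x)
      _ ≤ ∑ x : Fin k → A,
            (∏ t, ν {x t} ^ 2) * qq ^ ((i tl - k) + (n + 1 - j t0 - k)) :=
          Finset.sum_le_sum fun x _ => hxbound x
      _ = (∑ x : Fin k → A, ∏ t, ν {x t} ^ 2) *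
            qq ^ ((i tl - k) + (n + 1 - j t0 - k)) := by rw [← Finset.sum_mul]
      _ = (∑ a : A, ν {a} ^ 2) ^ k * qq ^ ((i tl - k) + (n + 1 - j t0 - k)) := by
          rw [← Fintype.prod_sum (f := fun (_ : Fin k) (a : A) => ν {a} ^ 2),
            Finset.prod_const, Finset.card_univ, Fintype.card_fin]
  refine hmain.trans (le_of_eq ?_)
  -- convert the RHS
  have h3 : i tl ≤ n := (hib tl).2
  have h4 : 1 ≤ j t0 := (hjb t0).1
  have hcast : (((i tl - k) + (n + 1 - j t0 - k) : ℕ) : ℝ) =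
      2 * ((n : ℝ) - k) - ((j t0 : ℝ) - 1) - ((n : ℝ) - (i tl : ℝ)) := by
    have h5 : ((i tl - k : ℕ) : ℝ) = (i tl : ℝ) - k := by
      rw [Nat.cast_sub hik]
    have h6 : ((n + 1 - j t0 - k : ℕ) : ℝ) = (n : ℝ) + 1 - (j t0 : ℝ) - k := by
      rw [Nat.cast_sub (by omega), Nat.cast_sub (by omega)]
      push_cast
      ring
    rw [Nat.cast_add, h5, h6]
    ring
  rw [← hcast, Real.rpow_natCast, ENNReal.ofReal_mul (pow_nonneg (pMatch_nonneg ν) k),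
    ENNReal.ofReal_pow (pMatch_nonneg ν), ENNReal.ofReal_pow (qConst_nonneg ν),
    pMatch_eq]

end PaperLCS
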